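/- Suppose ω > 0, ω − c²/4 > 0, and (16/27)(√(c² + 12ω) + 2c)(c² − 12ω − c√(c² + 12ω)) < a < 0. Then the equation R(z) = a, with R(z) = z³ − 4cz² − 16(ω − c²/4)z, has exactly three real roots φ₁ < 0 < φ₂ < φ₃. -/
import Mathlib


/-- Under the stated conditions, `R(z) = a` has exactly three real roots
`φ₁ < 0 < φ₂ < φ₃`. -/
theorem three_roots (ω c a : ℝ) (hω : 0 < ω) (hμ : 0 < ω - c ^ 2 / 4)
    (ha₁ : (16 / 27) * (Real.sqrt (c ^ 2 + 12 * ω) + 2 * c)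
        * (c ^ 2 - 12 * ω - c * Real.sqrt (c ^ 2 + 12 * ω)) < a)
    (ha₂ : a < 0) :
    ∃ φ₁ φ₂ φ₃ : ℝ, φ₁ < 0 ∧ 0 < φ₂ ∧ φ₂ < φ₃ ∧
      (φ₁ ^ 3 - 4 * c * φ₁ ^ 2 - 16 * (ω - c ^ 2 / 4) * φ₁ = a) ∧
      (φ₂ ^ 3 - 4 * c * φ₂ ^ 2 - 16 * (ω - c ^ 2 / 4) * φ₂ = a) ∧
      (φ₃ ^ 3 - 4 * c * φ₃ ^ 2 - 16 * (ω - c ^ 2 / 4) * φ₃ = a) ∧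
      ∀ z : ℝ, z ^ 3 - 4 * c * z ^ 2 - 16 * (ω - c ^ 2 / 4) * z = a →
        z = φ₁ ∨ z = φ₂ ∨ z = φ₃ := by
  set f : ℝ → ℝ := fun z => z ^ 3 - 4 * c * z ^ 2 - 16 * (ω - c ^ 2 / 4) * z with hf
  have hfc : Continuous f := by fun_prop
  set s : ℝ := Real.sqrt (c ^ 2 + 12 * ω) with hsdef
  have hs0 : 0 ≤ s := Real.sqrt_nonneg _
  have hs : s ^ 2 = c ^ 2 + 12 * ω := Real.sq_sqrt (by positivity)
  set zp : ℝ := (4 * c + 2 * s) / 3 with hzp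
  have hfzp : f zp = (16 / 27) * (s + 2 * c) * (c ^ 2 - 12 * ω - c * s) := by
    simp only [hf, hzp]
    linear_combination ((8 * s + 16 * c) / 27) * hs
  have hfzp_lt : f zp < a := by rw [hfzp]; exact ha₁
  have hs2c : -2 * c < s := by nlinarith [hs0, hs]
  have hzp_pos : 0 < zp := by rw [hzp]; linarith
  have hf0 : f 0 = 0 := by simp [hf]
  have hc1 : 0 ≤ |c| := abs_nonneg c
  have hc2 : c ≤ |c| := le_abs_self c
  have hc3 : -c ≤ |c| := neg_le_abs c
  have ha3 : 0 ≤ |a| := abs_nonneg a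
  have ha4 : -a ≤ |a| := neg_le_abs a
  -- key quadratic bound
  have hq : ∀ t : ℝ, 1 + 4 * |c| + 16 * ω ≤ t →
      1 ≤ t ^ 2 - 4 * c * t - 16 * (ω - c ^ 2 / 4) ∧
      1 ≤ t ^ 2 + 4 * c * t - 16 * (ω - c ^ 2 / 4) := by
    intro t ht
    have ht1 : 1 ≤ t := by linarith
    have ht0 : 0 ≤ t := by linarith
    have h1 : (1 + 4 * |c| + 16 * ω) * t ≤ t * t := mul_le_mul_of_nonneg_right ht ht0
    have h2 : 16 * ω * 1 ≤ 16 * ω * t := mul_le_mul_of_nonneg_left ht1 (by positivity)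
    have h3 : 4 * c * t ≤ 4 * |c| * t := mul_le_mul_of_nonneg_right (by linarith) ht0
    have h4 : -(4 * |c|) * t ≤ 4 * c * t := mul_le_mul_of_nonneg_right (by linarith) ht0
    have h5 : 0 ≤ c ^ 2 / 4 := by positivity
    have h6 : t ^ 2 = t * t := sq t
    constructor <;> linarith
  set B : ℝ := 1 + 4 * |c| + 16 * ω + |a| with hB
  have hB0 : 1 + 4 * |c| + 16 * ω ≤ B := by rw [hB]; linarith
  have hB1 : 1 ≤ B := by linarith
  set L : ℝ := -B with hL
  have hL0 : L < 0 := by rw [hL]; linarith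
  have hfL : f L < a := by
    have key := (hq B hB0).2
    have hflval : f L = -(B * (B ^ 2 + 4 * c * B - 16 * (ω - c ^ 2 / 4))) := by
      simp only [hf, hL]; ring
    have : B * 1 ≤ B * (B ^ 2 + 4 * c * B - 16 * (ω - c ^ 2 / 4)) :=
      mul_le_mul_of_nonneg_left key (by linarith)
    rw [hflval, hB] at *; linarith
  set U : ℝ := B + (2 / 3) * s with hU
  have hUB : 1 + 4 * |c| + 16 * ω ≤ U := by rw [hU]; linarith
  have hUzp : zp < U := by
    rw [hU, hzp, hB]; linarith
  have hfU : a < f U := by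
    have key := (hq U hUB).1
    have hfuval : f U = U * (U ^ 2 - 4 * c * U - 16 * (ω - c ^ 2 / 4)) := by
      simp only [hf]; ring
    have hU0 : 0 ≤ U := by linarith
    have : U * 1 ≤ U * (U ^ 2 - 4 * c * U - 16 * (ω - c ^ 2 / 4)) :=
      mul_le_mul_of_nonneg_left key hU0
    rw [hfuval]; linarith
  -- three roots via IVT
  have hIVT1 : a ∈ f '' Set.Ioo L 0 := by
    apply intermediate_value_Ioo hL0.le hfc.continuousOn
    rw [hf0]; exact ⟨hfL, ha₂⟩
  have hIVT2 : a ∈ f '' Set.Ioo 0 zp := by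
    apply intermediate_value_Ioo' hzp_pos.le hfc.continuousOn
    rw [hf0]; exact ⟨hfzp_lt, ha₂⟩
  have hIVT3 : a ∈ f '' Set.Ioo zp U := by
    apply intermediate_value_Ioo hUzp.le hfc.continuousOn
    exact ⟨hfzp_lt, hfU⟩
  obtain ⟨φ₁, hφ₁m, hφ₁⟩ := hIVT1
  obtain ⟨φ₂, hφ₂m, hφ₂⟩ := hIVT2
  obtain ⟨φ₃, hφ₃m, hφ₃⟩ := hIVT3
  have h1neg : φ₁ < 0 := hφ₁m.2
  have h2pos : 0 < φ₂ := hφ₂m.1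
  have h23 : φ₂ < φ₃ := lt_trans hφ₂m.2 hφ₃m.1
  have h12 : φ₁ < φ₂ := lt_trans h1neg h2pos
  have h13 : φ₁ < φ₃ := lt_trans h12 h23
  simp only [hf] at hφ₁ hφ₂ hφ₃
  refine ⟨φ₁, φ₂, φ₃, h1neg, h2pos, h23, hφ₁, hφ₂, hφ₃, ?_⟩
  intro z hz
  have e12 : φ₁ ^ 2 + φ₁ * φ₂ + φ₂ ^ 2 - 4 * c * (φ₁ + φ₂) - 16 * (ω - c ^ 2 / 4) = 0 := by
    have h : (φ₁ - φ₂) * (φ₁ ^ 2 + φ₁ * φ₂ + φ₂ ^ 2 - 4 * c * (φ₁ + φ₂) - 16 * (ω - c ^ 2 / 4)) = 0 := by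
      linear_combination hφ₁ - hφ₂
    rcases mul_eq_zero.mp h with h' | h'
    · exact absurd h' (sub_ne_zero.mpr h12.ne)
    · exact h'
  have e13 : φ₁ ^ 2 + φ₁ * φ₃ + φ₃ ^ 2 - 4 * c * (φ₁ + φ₃) - 16 * (ω - c ^ 2 / 4) = 0 := by
    have h : (φ₁ - φ₃) * (φ₁ ^ 2 + φ₁ * φ₃ + φ₃ ^ 2 - 4 * c * (φ₁ + φ₃) - 16 * (ω - c ^ 2 / 4)) = 0 := by
      linear_combination hφ₁ - hφ₃
    rcases mul_eq_zero.mp h with h' | h'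
    · exact absurd h' (sub_ne_zero.mpr h13.ne)
    · exact h'
  have esum : φ₁ + φ₂ + φ₃ = 4 * c := by
    have h : (φ₂ - φ₃) * (φ₁ + φ₂ + φ₃ - 4 * c) = 0 := by linear_combination e12 - e13
    rcases mul_eq_zero.mp h with h' | h'
    · exact absurd h' (sub_ne_zero.mpr h23.ne)
    · linarith [sub_eq_zero.mp h']
  have epair : φ₁ * φ₂ + φ₁ * φ₃ + φ₂ * φ₃ = -(16 * (ω - c ^ 2 / 4)) := by
    linear_combination (φ₁ + φ₂) * esum - e12
  have eprod : φ₁ * φ₂ * φ₃ = a := by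
    linear_combination hφ₁ - φ₁ ^ 2 * esum + φ₁ * epair
  have hfactor : (z - φ₁) * (z - φ₂) * (z - φ₃) = 0 := by
    linear_combination hz - z ^ 2 * esum + z * epair - eprod
  rcases mul_eq_zero.mp hfactor with h | h
  · rcases mul_eq_zero.mp h with h | h
    · exact Or.inl (sub_eq_zero.mp h)
    · exact Or.inr (Or.inl (sub_eq_zero.mp h))
  · exact Or.inr (Or.inr (sub_eq_zero.mp h))
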